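/- Let θ be an n×n real skew-symmetric matrix and g = [[A,B],[C,D]] ∈ O(n,n|ℝ) with Cθ+D invertible. Then g⁻¹ = [[Dᵗ, Bᵗ],[Cᵗ, Aᵗ]] satisfies: Cᵗ(gθ) + Aᵗ is invertible and g⁻¹(gθ) = θ, where gθ = (Aθ+B)(Cθ+D)⁻¹. -/
import Mathlib

open Matrix

theorem stmt19 (n : ℕ) (A B C D θ : Matrix (Fin n) (Fin n) ℝ)
    (hg : (Matrix.fromBlocks A B C D)ᵀ * Matrix.fromBlocks 0 1 1 0 * Matrix.fromBlocks A B C D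
      = Matrix.fromBlocks 0 1 1 0)
    (hθ : θᵀ = -θ) (hinv : IsUnit (C * θ + D)) :
    (Matrix.fromBlocks A B C D)⁻¹ = Matrix.fromBlocks Dᵀ Bᵀ Cᵀ Aᵀ ∧
    IsUnit (Cᵀ * ((A * θ + B) * (C * θ + D)⁻¹) + Aᵀ) ∧
    (Dᵀ * ((A * θ + B) * (C * θ + D)⁻¹) + Bᵀ) *
        (Cᵀ * ((A * θ + B) * (C * θ + D)⁻¹) + Aᵀ)⁻¹ = θ := by
  simp only [Matrix.fromBlocks_transpose, Matrix.fromBlocks_multiply, Matrix.mul_zero,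
    Matrix.zero_mul, Matrix.mul_one, Matrix.one_mul, zero_add, add_zero,
    Matrix.fromBlocks_inj] at hg
  obtain ⟨h1, h2, h3, h4⟩ := hg
  -- h1 : Cᵀ*A + Aᵀ*C = 0, h2 : Cᵀ*B + Aᵀ*D = 1, h3 : Dᵀ*A + Bᵀ*C = 1, h4 : Dᵀ*B + Bᵀ*D = 0
  have hEE : (C * θ + D)⁻¹ * (C * θ + D) = 1 :=
    Matrix.nonsing_inv_mul _ ((Matrix.isUnit_iff_isUnit_det _).mp hinv)
  have key : (Cᵀ * ((A * θ + B) * (C * θ + D)⁻¹) + Aᵀ) * (C * θ + D) = 1 := by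
    have : (Cᵀ * ((A * θ + B) * (C * θ + D)⁻¹) + Aᵀ) * (C * θ + D)
        = Cᵀ * ((A * θ + B) * ((C * θ + D)⁻¹ * (C * θ + D))) + Aᵀ * (C * θ + D) := by
      noncomm_ring
    rw [this, hEE, mul_one]
    calc Cᵀ * (A * θ + B) + Aᵀ * (C * θ + D)
        = (Cᵀ * A + Aᵀ * C) * θ + (Cᵀ * B + Aᵀ * D) := by noncomm_ring
      _ = 1 := by rw [h1, h2]; simp
  have key2 : (Dᵀ * ((A * θ + B) * (C * θ + D)⁻¹) + Bᵀ) * (C * θ + D) = θ := by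
    have : (Dᵀ * ((A * θ + B) * (C * θ + D)⁻¹) + Bᵀ) * (C * θ + D)
        = Dᵀ * ((A * θ + B) * ((C * θ + D)⁻¹ * (C * θ + D))) + Bᵀ * (C * θ + D) := by
      noncomm_ring
    rw [this, hEE, mul_one]
    calc Dᵀ * (A * θ + B) + Bᵀ * (C * θ + D)
        = (Dᵀ * A + Bᵀ * C) * θ + (Dᵀ * B + Bᵀ * D) := by noncomm_ring
      _ = θ := by rw [h3, h4]; simp
  refine ⟨?_, @isUnit_of_invertible _ _ _ (invertibleOfRightInverse _ _ key), ?_⟩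
  · apply Matrix.inv_eq_left_inv
    simp only [Matrix.fromBlocks_multiply, ← Matrix.fromBlocks_one, Matrix.fromBlocks_inj]
    exact ⟨h3, h4, h1, h2⟩
  · rw [Matrix.inv_eq_right_inv key, key2]
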